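/- Let g(z) = −log(1 − Φ(z)). Then for every z > 0, g is twice differentiable at z with second derivative g''(z) = φ(z)·(φ(z) − z·(1 − Φ(z)))/(1 − Φ(z))², and this second derivative is strictly positive. -/

import Mathlib

open MeasureTheory Real Set Filter


/-- The standard normal density φ(t) = (1/√(2π))·exp(−t²/2). -/
noncomputable def stdNormalPDF (t : ℝ) : ℝ :=
  (Real.sqrt (2 * Real.pi))⁻¹ * Real.exp (-t ^ 2 / 2)

/-- The standard normal cumulative distribution function Φ(t) = ∫_{−∞}^t φ(s) ds. -/
noncomputable def stdNormalCDF (t : ℝ) : ℝ :=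
  ∫ s in Set.Iic t, stdNormalPDF s

/-- g(z) = −log(1 − Φ(z)). -/
noncomputable def g (z : ℝ) : ℝ := -Real.log (1 - stdNormalCDF z)

lemma pdf_eq : stdNormalPDF = fun t => (Real.sqrt (2 * Real.pi))⁻¹ * Real.exp (-(1/2 : ℝ) * t ^ 2) := by
  funext t; unfold stdNormalPDF; ring_nf

lemma pdf_cont : Continuous stdNormalPDF := by
  unfold stdNormalPDF; continuity

lemma pdf_pos (t : ℝ) : 0 < stdNormalPDF t :=
  mul_pos (inv_pos.2 (Real.sqrt_pos.2 (by positivity))) (Real.exp_pos _)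

lemma pdf_integrable : Integrable stdNormalPDF := by
  rw [pdf_eq]
  exact (integrable_exp_neg_mul_sq one_half_pos).const_mul _

lemma pdf_total : ∫ t, stdNormalPDF t = 1 := by
  rw [pdf_eq]
  rw [MeasureTheory.integral_const_mul, integral_gaussian]
  have h : Real.pi / (1/2 : ℝ) = 2 * Real.pi := by ring
  rw [h, inv_mul_cancel₀ (ne_of_gt (Real.sqrt_pos.2 (by positivity)))]

lemma tail_eq (z : ℝ) : 1 - stdNormalCDF z = ∫ t in Set.Ioi z, stdNormalPDF t := by
  have h := MeasureTheory.integral_add_compl (measurableSet_Iic (a := z)) pdf_integrable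
  rw [compl_Iic] at h
  rw [stdNormalCDF, ← pdf_total, ← h]; ring

lemma tail_pos (z : ℝ) : 0 < 1 - stdNormalCDF z := by
  rw [tail_eq]
  rw [setIntegral_pos_iff_support_of_nonneg_ae
    (Filter.Eventually.of_forall fun t => (pdf_pos t).le) pdf_integrable.integrableOn]
  have hsub : Set.Ioi z ⊆ Function.support stdNormalPDF ∩ Set.Ioi z :=
    fun t ht => ⟨(pdf_pos t).ne', ht⟩
  calc (0 : ENNReal) < volume (Set.Ioi z) := by simp
    _ ≤ _ := measure_mono hsub

lemma cdf_hasDeriv (x : ℝ) : HasDerivAt stdNormalCDF (stdNormalPDF x) x := by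
  have key : ∀ t : ℝ, stdNormalCDF t = stdNormalCDF 0 + ∫ s in (0:ℝ)..t, stdNormalPDF s := by
    intro t
    rw [← intervalIntegral.integral_Iic_sub_Iic pdf_integrable.integrableOn
      pdf_integrable.integrableOn]
    unfold stdNormalCDF; ring
  have hd : HasDerivAt (fun t => stdNormalCDF 0 + ∫ s in (0:ℝ)..t, stdNormalPDF s)
      (stdNormalPDF x) x := by
    refine HasDerivAt.const_add _ ?_
    exact intervalIntegral.integral_hasDerivAt_right
      (pdf_integrable.intervalIntegrable)
      (pdf_cont.stronglyMeasurableAtFilter _ _)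
      pdf_cont.continuousAt
  exact hd.congr_of_eventuallyEq (Filter.Eventually.of_forall key)

lemma pdf_hasDeriv (x : ℝ) : HasDerivAt stdNormalPDF (-x * stdNormalPDF x) x := by
  have h1 : HasDerivAt (fun t : ℝ => -t ^ 2 / 2) (-x) x := by
    have := ((hasDerivAt_pow 2 x).neg).div_const 2
    exact this.congr_deriv (by ring)
  have h2 := (h1.exp).const_mul (Real.sqrt (2 * Real.pi))⁻¹
  refine h2.congr_deriv ?_
  unfold stdNormalPDF; ring

lemma first_moment (z : ℝ) : ∫ t in Set.Ioi z, t * stdNormalPDF t = stdNormalPDF z := by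
  have hderiv : ∀ x ∈ Set.Ioi z, HasDerivAt (fun t => -stdNormalPDF t) (x * stdNormalPDF x) x := by
    intro x _
    have := (pdf_hasDeriv x).neg
    exact this.congr_deriv (by ring)
  have hint : IntegrableOn (fun t => t * stdNormalPDF t) (Set.Ioi z) := by
    have : Integrable (fun t => t * stdNormalPDF t) := by
      rw [pdf_eq]
      have := (integrable_mul_exp_neg_mul_sq one_half_pos).const_mul (Real.sqrt (2 * Real.pi))⁻¹
      exact this.congr (Filter.Eventually.of_forall fun t => by ring)
    exact this.integrableOn
  have htend : Filter.Tendsto (fun t => -stdNormalPDF t) Filter.atTop (nhds 0) := by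
    have h0 : Filter.Tendsto (fun t : ℝ => -t ^ 2 / 2) Filter.atTop Filter.atBot := by
      apply Filter.Tendsto.atBot_div_const (by norm_num : (0:ℝ) < 2)
      exact Filter.tendsto_neg_atBot_iff.2 (tendsto_pow_atTop (by norm_num))
    have h1 : Filter.Tendsto stdNormalPDF Filter.atTop (nhds 0) := by
      have h2 := (Real.tendsto_exp_atBot.comp h0).const_mul (Real.sqrt (2 * Real.pi))⁻¹
      rw [mul_zero] at h2
      exact h2.congr fun t => by simp [stdNormalPDF, Function.comp]
    simpa using h1.neg
  have := MeasureTheory.integral_Ioi_of_hasDerivAt_of_tendsto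
    (pdf_cont.neg.continuousWithinAt) hderiv hint htend
  rw [this]; simp

lemma mills (z : ℝ) (hz : 0 < z) : 0 < stdNormalPDF z - z * (1 - stdNormalCDF z) := by
  have key : stdNormalPDF z - z * (1 - stdNormalCDF z)
      = ∫ t in Set.Ioi z, (t - z) * stdNormalPDF t := by
    rw [tail_eq, ← first_moment z]
    rw [← MeasureTheory.integral_const_mul]
    rw [← MeasureTheory.integral_sub]
    · congr 1; funext t; ring
    · have : Integrable (fun t => t * stdNormalPDF t) := by
        rw [pdf_eq]
        have := (integrable_mul_exp_neg_mul_sq one_half_pos).const_mul (Real.sqrt (2 * Real.pi))⁻¹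
        exact this.congr (Filter.Eventually.of_forall fun t => by ring)
      exact this.integrableOn
    · exact (pdf_integrable.const_mul z).integrableOn
  rw [key]
  have hnn : 0 ≤ᵐ[volume.restrict (Set.Ioi z)] fun t => (t - z) * stdNormalPDF t := by
    filter_upwards [ae_restrict_mem measurableSet_Ioi] with t ht
    exact mul_nonneg (by simp at ht; linarith) (pdf_pos t).le
  have hint : IntegrableOn (fun t => (t - z) * stdNormalPDF t) (Set.Ioi z) := by
    have h1 : Integrable (fun t => t * stdNormalPDF t) := by
      rw [pdf_eq]
      have := (integrable_mul_exp_neg_mul_sq one_half_pos).const_mul (Real.sqrt (2 * Real.pi))⁻¹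
      exact this.congr (Filter.Eventually.of_forall fun t => by ring)
    have := h1.sub (pdf_integrable.const_mul z)
    exact (this.congr (Filter.Eventually.of_forall fun t => by
      simp only [Pi.sub_apply]; ring)).integrableOn
  rw [setIntegral_pos_iff_support_of_nonneg_ae hnn hint]
  have hsub : Set.Ioi z ⊆ Function.support (fun t => (t - z) * stdNormalPDF t) ∩ Set.Ioi z :=
    fun t ht => ⟨(mul_pos (by linarith [ht.out]) (pdf_pos t)).ne', ht⟩
  calc (0 : ENNReal) < volume (Set.Ioi z) := by simp
    _ ≤ _ := measure_mono hsub

lemma g_hasDeriv (x : ℝ) : HasDerivAt g (stdNormalPDF x / (1 - stdNormalCDF x)) x := by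
  have hu : HasDerivAt (fun t => 1 - stdNormalCDF t) (-stdNormalPDF x) x :=
    (cdf_hasDeriv x).const_sub 1
  have := (hu.log (tail_pos x).ne').neg
  have hg : g = fun t => -Real.log (1 - stdNormalCDF t) := rfl
  rw [hg]
  exact this.congr_deriv (by ring)

/-- For every z > 0, g is twice differentiable at z with second derivative
g''(z) = φ(z)·(φ(z) − z·(1 − Φ(z)))/(1 − Φ(z))², and this second derivative is
strictly positive. -/
theorem stmt_1 (z : ℝ) (hz : 0 < z) :
    DifferentiableAt ℝ g z ∧
    HasDerivAt (deriv g)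
      (stdNormalPDF z * (stdNormalPDF z - z * (1 - stdNormalCDF z)) /
        (1 - stdNormalCDF z) ^ 2) z ∧
    0 < stdNormalPDF z * (stdNormalPDF z - z * (1 - stdNormalCDF z)) /
        (1 - stdNormalCDF z) ^ 2 := by
  refine ⟨(g_hasDeriv z).differentiableAt, ?_, ?_⟩
  · have hdg : deriv g = fun x => stdNormalPDF x / (1 - stdNormalCDF x) :=
      funext fun x => (g_hasDeriv x).deriv
    rw [hdg]
    have := (pdf_hasDeriv z).div ((cdf_hasDeriv z).const_sub 1) (tail_pos z).ne'
    exact this.congr_deriv (by ring)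
  · exact div_pos (mul_pos (pdf_pos z) (mills z hz)) (pow_pos (tail_pos z) 2)
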